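/- Let a ≤ a' ≤ b ≤ b' be real numbers, let R be a buffered regime indicator for (y, d, a, b) and R' a buffered regime indicator for (y, d, a', b'), and assume R_{d−1} = R'_{d−1}. Then for every t ≥ d: R'_t − R_t = Σ_{j=0}^{t−d} H_{t,j}·[ (1 − R'_{t−1−j})·1(a < y_{t−d−j} ≤ a') + R'_{t−1−j}·1(b < y_{t−d−j} ≤ b') ], where H_{t,0} = 1 and H_{t,j} = Π_{l=1}^{j} 1(a < y_{t−d+1−l} ≤ b) for j ≥ 1, and 1(·) denotes the indicator of the stated condition. -/

import Mathlib

/-- `R` is a buffered regime indicator for data `y`, delay `d` and thresholds `rL ≤ rU`: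
`R` is `{0,1}`-valued and, for `t ≥ d`, `R t = 1` if `y (t-d) ≤ rL`, `R t = 0` if
`y (t-d) > rU`, and `R t = R (t-1)` otherwise. -/
def IsBufferedIndicator (y : ℕ → ℝ) (d : ℕ) (rL rU : ℝ) (R : ℕ → ℝ) : Prop :=
  (∀ t, R t = 0 ∨ R t = 1) ∧
  ∀ t, d ≤ t →
    R t = if y (t - d) ≤ rL then 1 else if rU < y (t - d) then 0 else R (t - 1)

lemma ind_mul_ind (P Q : Prop) [Decidable P] [Decidable Q] :
    (if P ∧ Q then (1:ℝ) else 0) = (if P then (1:ℝ) else 0) * (if Q then (1:ℝ) else 0) := by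
  by_cases hP : P <;> by_cases hQ : Q <;> simp [hP, hQ]

set_option maxHeartbeats 1600000 in
/-- Expansion of the difference of two buffered regime indicators (with ordered
thresholds `a ≤ a' ≤ b ≤ b'` and common initialization at time `d-1`) as a sum over
buffer-zone sojourns, with `H_{t,j} = ∏_{l=1}^j 1(a < y_{t-d+1-l} ≤ b)`. -/
theorem buffered_indicator_expansion (y : ℕ → ℝ) (d : ℕ) (hd : 1 ≤ d)
    (a a' b b' : ℝ) (h1 : a ≤ a') (h2 : a' ≤ b) (h3 : b ≤ b')
    (R R' : ℕ → ℝ)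
    (hR : IsBufferedIndicator y d a b R)
    (hR' : IsBufferedIndicator y d a' b' R')
    (hinit : R (d - 1) = R' (d - 1))
    (t : ℕ) (ht : d ≤ t) :
    R' t - R t =
      ∑ j ∈ Finset.range (t - d + 1),
        (∏ l ∈ Finset.Icc 1 j,
            (if a < y (t - d + 1 - l) ∧ y (t - d + 1 - l) ≤ b then (1 : ℝ) else 0))
          * ((1 - R' (t - 1 - j)) * (if a < y (t - d - j) ∧ y (t - d - j) ≤ a' then 1 else 0)
            + R' (t - 1 - j) * (if b < y (t - d - j) ∧ y (t - d - j) ≤ b' then 1 else 0)) := by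
  obtain ⟨n, rfl⟩ := Nat.exists_eq_add_of_le ht
  clear ht
  induction n with
  | zero =>
    have hRe := hR.2 d le_rfl
    have hR'e := hR'.2 d le_rfl
    simp only [Nat.sub_self] at hRe hR'e
    simp only [Nat.add_zero, Nat.sub_self, Nat.zero_add, Nat.sub_zero,
      Finset.range_one, Finset.sum_singleton]
    rw [show Finset.Icc 1 0 = ∅ from rfl, Finset.prod_empty]
    simp only [ind_mul_ind]
    split_ifs at hRe hR'e ⊢ <;> linarith
  | succ n ih =>
    simp only [Nat.add_sub_cancel_left] at ih ⊢
    have hRe := hR.2 (d + (n + 1)) (by omega)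
    have hR'e := hR'.2 (d + (n + 1)) (by omega)
    simp only [Nat.add_sub_cancel_left] at hRe hR'e
    rw [show d + (n + 1) - 1 = d + n from by omega] at hRe hR'e
    rw [Finset.sum_range_succ']
    have hshift : ∀ j ∈ Finset.range (n + 1),
        (∏ l ∈ Finset.Icc 1 (j + 1),
            (if a < y (n + 1 + 1 - l) ∧ y (n + 1 + 1 - l) ≤ b then (1 : ℝ) else 0))
          * ((1 - R' (d + (n + 1) - 1 - (j + 1)))
              * (if a < y (n + 1 - (j + 1)) ∧ y (n + 1 - (j + 1)) ≤ a' then 1 else 0)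
            + R' (d + (n + 1) - 1 - (j + 1))
              * (if b < y (n + 1 - (j + 1)) ∧ y (n + 1 - (j + 1)) ≤ b' then 1 else 0))
        = (if a < y (n + 1) ∧ y (n + 1) ≤ b then (1 : ℝ) else 0) *
          ((∏ l ∈ Finset.Icc 1 j,
              (if a < y (n + 1 - l) ∧ y (n + 1 - l) ≤ b then (1 : ℝ) else 0))
            * ((1 - R' (d + n - 1 - j))
                * (if a < y (n - j) ∧ y (n - j) ≤ a' then 1 else 0)
              + R' (d + n - 1 - j)
                * (if b < y (n - j) ∧ y (n - j) ≤ b' then 1 else 0))) := by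
      intro j hj
      rw [show d + (n + 1) - 1 - (j + 1) = d + n - 1 - j from by omega,
          show n + 1 - (j + 1) = n - j from by omega, ← mul_assoc]
      congr 1
      rw [← Finset.Ico_add_one_right_eq_Icc, ← Finset.Ico_add_one_right_eq_Icc,
          Finset.prod_Ico_eq_prod_range, Finset.prod_Ico_eq_prod_range]
      simp only [Nat.add_sub_cancel]
      rw [Finset.prod_range_succ']
      rw [mul_comm]
      congr 1
      refine Finset.prod_congr rfl fun i _ => ?_
      have he : n + 1 + 1 - (1 + (i + 1)) = n + 1 - (1 + i) := by omega
      rw [he]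
    rw [Finset.sum_congr rfl hshift, ← Finset.mul_sum, ← ih]
    rw [show Finset.Icc 1 0 = ∅ from rfl, Finset.prod_empty]
    rw [show n + 1 - 0 = n + 1 from rfl, show d + (n + 1) - 1 - 0 = d + n from by omega]
    simp only [ind_mul_ind]
    have h0 := hR'.1 (d + n)
    clear hshift ih hinit hR hR'
    rcases h0 with h0 | h0 <;> split_ifs at hRe hR'e ⊢ <;> linarith
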